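/- Let G be a group, F a field, and let χ₁, χ₂ be one-dimensional F[G]-modules with χ₁ not isomorphic to χ₂. Let ρ be a two-dimensional F[G]-module that is a nonsplit extension 0 → χ₁ → ρ → χ₂ → 0 (so in particular End_{F[G]}(ρ) = F). Let M₀ be an F-vector space and M = ρ ⊗_F M₀ with G acting through ρ, and let M' ⊆ M be an F[G]-submodule. Set M₀' = Hom_{F[G]}(χ₁, M'); the evaluation map ev : χ₁ ⊗_F M₀' → M', v ⊗ φ ↦ φ(v), is injective. Then there exists a unique injective F[G]-module homomorphism ι : M' → ρ ⊗_F M₀' such that the composite ι ∘ ev : χ₁ ⊗_F M₀' → ρ ⊗_F M₀' equals the map induced by the inclusion χ₁ ↪ ρ tensored with the identity of M₀'. -/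

import Mathlib

open TensorProduct

section Aux

variable {F : Type*} [Field F]

/-- Projection onto the second factor along a functional on the first. -/
noncomputable def projAux {V N : Type*} [AddCommMonoid V] [Module F V]
    [AddCommMonoid N] [Module F N] (K : V →ₗ[F] F) : V ⊗[F] N →ₗ[F] N :=
  (TensorProduct.lid F N).toLinearMap ∘ₗ LinearMap.rTensor N K

@[simp] lemma projAux_tmul {V N : Type*} [AddCommMonoid V] [Module F V]
    [AddCommMonoid N] [Module F N] (K : V →ₗ[F] F) (v : V) (n : N) :
    projAux K (v ⊗ₜ[F] n) = K v • n := by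
  simp [projAux]

lemma projAux_map {V N : Type*} [AddCommMonoid V] [Module F V]
    [AddCommMonoid N] [Module F N] (K : V →ₗ[F] F) (f : V →ₗ[F] V) (x : V ⊗[F] N) :
    projAux K (TensorProduct.map f LinearMap.id x) = projAux (K ∘ₗ f) x := by
  induction x with
  | zero => simp
  | tmul v n => simp
  | add a b ha hb => simp [ha, hb]

lemma projAux_add_map {V N : Type*} [AddCommMonoid V] [Module F V]
    [AddCommMonoid N] [Module F N] (K K' : V →ₗ[F] F) (a b : F) (x : V ⊗[F] N) :
    projAux (a • K + b • K') x = a • projAux K x + b • projAux K' x := by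
  induction x with
  | zero => simp
  | tmul v n => simp [add_smul, smul_smul]
  | add u v hu hv => simp only [map_add, hu, hv, smul_add]; abel

lemma projAux_smul_map {V N : Type*} [AddCommMonoid V] [Module F V]
    [AddCommMonoid N] [Module F N] (K : V →ₗ[F] F) (a : F) (x : V ⊗[F] N) :
    projAux (a • K) x = a • projAux K x := by
  induction x with
  | zero => simp
  | tmul v n => simp [smul_smul]
  | add u v hu hv => simp only [map_add, hu, hv, smul_add]

lemma reconAux {V N : Type*} [AddCommMonoid V] [Module F V]
    [AddCommMonoid N] [Module F N] (v₀ w : V) (K₀ K₁ : V →ₗ[F] F)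
    (h : ∀ v : V, K₀ v • v₀ + K₁ v • w = v) (x : V ⊗[F] N) :
    v₀ ⊗ₜ[F] (projAux K₀ x) + w ⊗ₜ[F] (projAux K₁ x) = x := by
  induction x with
  | zero => simp
  | tmul v n =>
      simp only [projAux_tmul, ← smul_tmul, ← add_tmul, h v]
  | add u v hu hv =>
      simp only [map_add, tmul_add]
      rw [show ∀ a b c d : V ⊗[F] N, a + b + (c + d) = (a + c) + (b + d) by intros; abel]
      rw [hu, hv]

/-- The key consequence of nonsplitness. -/
lemma starAux {G : Type*} (δ c : G → F) (g₀ : G) (hδ : δ g₀ ≠ 0)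
    (hns : ¬∃ t : F, ∀ g, c g = t * δ g)
    {N : Type*} [AddCommGroup N] [Module F N] (s u : N)
    (h : ∀ g, δ g • s = c g • u) : s = 0 ∧ u = 0 := by
  have hu : u = 0 := by
    by_contra hu
    rw [← Module.forall_dual_apply_eq_zero_iff F] at hu
    push_neg at hu
    obtain ⟨f, hf⟩ := hu
    refine hns ⟨(f u)⁻¹ * f s, fun g => ?_⟩
    have h2 := congrArg f (h g)
    simp only [map_smul, smul_eq_mul] at h2
    rw [mul_assoc, inv_mul_eq_div, eq_div_iff hf]
    linear_combination -h2
  refine ⟨?_, hu⟩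
  have := h g₀
  rw [hu, smul_zero, smul_eq_zero] at this
  exact this.resolve_left hδ

/-- Existence of coordinates. -/
lemma coordsAux {V : Type*} [AddCommGroup V] [Module F V]
    (hdim : Module.finrank F V = 2) (v₀ : V) (hv₀ : v₀ ≠ 0)
    (w : V) (hw : w ∉ Submodule.span F {v₀}) :
    ∃ K₀ K₁ : V →ₗ[F] F, K₀ v₀ = 1 ∧ K₁ v₀ = 0 ∧ K₀ w = 0 ∧ K₁ w = 1 ∧
      ∀ v : V, K₀ v • v₀ + K₁ v • w = v := by
  have hli : LinearIndependent F ![w, v₀] := by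
    rw [linearIndependent_fin2]
    refine ⟨hv₀, fun a ha => hw ?_⟩
    simp only [Matrix.cons_val_one, Matrix.head_cons, Matrix.cons_val_zero] at ha
    rw [← ha]
    exact Submodule.smul_mem _ _ (Submodule.mem_span_singleton_self v₀)
  let b := basisOfLinearIndependentOfCardEqFinrank hli (by simp [hdim])
  have hb : ⇑b = ![w, v₀] := coe_basisOfLinearIndependentOfCardEqFinrank hli _
  refine ⟨b.coord 1, b.coord 0, ?_, ?_, ?_, ?_, fun v => ?_⟩
  · simp only [Module.Basis.coord_apply]
    rw [show v₀ = b 1 by simp [hb]]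
    simp
  · simp only [Module.Basis.coord_apply]
    rw [show v₀ = b 1 by simp [hb]]
    simp
  · simp only [Module.Basis.coord_apply]
    rw [show w = b 0 by simp [hb]]
    simp
  · simp only [Module.Basis.coord_apply]
    rw [show w = b 0 by simp [hb]]
    simp
  · have := b.sum_repr v
    rw [Fin.sum_univ_two] at this
    simp only [Module.Basis.coord_apply]
    rw [show v₀ = b 1 by simp [hb], show w = b 0 by simp [hb]]
    conv_rhs => rw [← this]
    abel

end Aux


/-- The `F`-submodule of `F[G]`-module homomorphisms (equivariant `F`-linear maps)
between two representations. -/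
def equivHom {F : Type*} [Field F] {G : Type*} [Group G]
    {S M : Type*} [AddCommGroup S] [Module F S] [AddCommGroup M] [Module F M]
    (ρ : Representation F G S) (τ : Representation F G M) :
    Submodule F (S →ₗ[F] M) where
  carrier := {φ | ∀ (g : G) (s : S), φ (ρ g s) = τ g (φ s)}
  add_mem' := by
    intro φ ψ hφ hψ g s
    simp [hφ g s, hψ g s]
  zero_mem' := by intro g s; simp
  smul_mem' := by
    intro c φ hφ g s
    simp [hφ g s]

/-- The evaluation map `σ ⊗_F Hom_{F[G]}(σ, M) → M`, `s ⊗ φ ↦ φ(s)`. -/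
noncomputable def evalMap {F : Type*} [Field F] {G : Type*} [Group G]
    {S M : Type*} [AddCommGroup S] [Module F S] [AddCommGroup M] [Module F M]
    (ρ : Representation F G S) (τ : Representation F G M) :
    S ⊗[F] ↥(equivHom ρ τ) →ₗ[F] M :=
  TensorProduct.lift (Submodule.subtype (equivHom ρ τ)).flip

/-- The restriction of a representation to an invariant submodule. -/
def subRep {F : Type*} [Field F] {G : Type*} [Group G]
    {M : Type*} [AddCommGroup M] [Module F M]
    (τ : Representation F G M) (N : Submodule F M) (hN : ∀ g, ∀ x ∈ N, τ g x ∈ N) :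
    Representation F G ↥N where
  toFun g := (τ g).restrict (hN g)
  map_one' := by
    refine LinearMap.ext fun x => Subtype.ext ?_
    show τ 1 x.1 = x.1
    rw [map_one]
    rfl
  map_mul' := by
    intro g h
    refine LinearMap.ext fun x => Subtype.ext ?_
    show τ (g * h) x.1 = τ g (τ h x.1)
    rw [map_mul]
    rfl

/-- The one-dimensional representation of `G` on `F` given by a character `χ : G → Fˣ`. -/
def charRep {F : Type*} [Field F] {G : Type*} [Group G] (χ : G →* Fˣ) :
    Representation F G F where
  toFun g := (χ g : F) • LinearMap.id
  map_one' := by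
    simp [Module.End.one_eq_id]
  map_mul' := by
    intro g h
    refine LinearMap.ext fun x => ?_
    simp only [map_mul, Units.val_mul, LinearMap.smul_apply, LinearMap.id_apply,
      Module.End.mul_apply, smul_eq_mul]
    ring

set_option maxHeartbeats 3200000 in
set_option synthInstance.maxHeartbeats 800000 in
/-- Let `χ₁ ≠ χ₂` be characters of `G` over `F`, and `ρ` a
two-dimensional nonsplit extension `0 → χ₁ → ρ → χ₂ → 0` (with `χ₁`-eigenvector `v₀`).
Let `M = ρ ⊗_F M₀` with `G` acting through `ρ`, and `M' ⊆ M` an `F[G]`-submodule.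
Set `M₀' = Hom_{F[G]}(χ₁, M')`; the evaluation map `ev : χ₁ ⊗_F M₀' → M'` is injective,
and there exists a unique injective `F[G]`-module homomorphism `ι : M' → ρ ⊗_F M₀'`
whose composite with `ev` is induced by the inclusion `χ₁ ↪ ρ` tensored with `id`. -/
theorem statement9 {F : Type*} [Field F] {G : Type*} [Group G]
    (χ₁ χ₂ : G →* Fˣ) (hne : χ₁ ≠ χ₂)
    {V : Type*} [AddCommGroup V] [Module F V] (ρ : Representation F G V)
    (hdim : Module.finrank F V = 2)
    (v₀ : V) (hv₀ : v₀ ≠ 0)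
    (heig : ∀ g : G, ρ g v₀ = (χ₁ g : F) • v₀)
    (hquot : ∀ (g : G) (v : V), ρ g v - (χ₂ g : F) • v ∈ Submodule.span F {v₀})
    (hnonsplit : ¬∃ w : V, w ∉ Submodule.span F {v₀} ∧ ∀ g : G, ρ g w = (χ₂ g : F) • w)
    {M₀ : Type*} [AddCommGroup M₀] [Module F M₀]
    (M' : Submodule F (V ⊗[F] M₀))
    (hM' : ∀ g, ∀ x ∈ M',
      (ρ.tprod (Representation.trivial F (G := G) (V := M₀))) g x ∈ M') :
    Function.Injective
      (evalMap (charRep χ₁)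
        (subRep (ρ.tprod (Representation.trivial F (G := G) (V := M₀))) M' hM')) ∧
    ∃! ι : ↥M' →ₗ[F]
        (V ⊗[F] ↥(equivHom (charRep χ₁)
          (subRep (ρ.tprod (Representation.trivial F (G := G) (V := M₀))) M' hM'))),
      Function.Injective ι ∧
      (∀ (g : G) (x : ↥M'),
        ι ((subRep (ρ.tprod (Representation.trivial F (G := G) (V := M₀))) M' hM') g x) =
          TensorProduct.map (ρ g) LinearMap.id (ι x)) ∧
      (∀ (c : F) (φ : ↥(equivHom (charRep χ₁)
          (subRep (ρ.tprod (Representation.trivial F (G := G) (V := M₀))) M' hM'))),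
        ι (evalMap (charRep χ₁)
            (subRep (ρ.tprod (Representation.trivial F (G := G) (V := M₀))) M' hM')
            (c ⊗ₜ[F] φ)) =
          (c • v₀) ⊗ₜ[F] φ) := by
  classical
  set T := ρ.tprod (Representation.trivial F (G := G) (V := M₀)) with hTdef
  set τ := subRep T M' hM' with hτdef
  -- basic facts
  have hTmap : ∀ (g : G) (z : V ⊗[F] M₀), T g z = TensorProduct.map (ρ g) LinearMap.id z := by
    intro g z
    have htriv : (Representation.trivial F (G := G) (V := M₀)) g = LinearMap.id :=
      LinearMap.ext fun v => rfl
    rw [hTdef, Representation.tprod_apply, htriv]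
  have hτval : ∀ (g : G) (y : ↥M'), (τ g y : V ⊗[F] M₀) = T g (y : V ⊗[F] M₀) := fun g y => rfl
  obtain ⟨g₀, hg₀⟩ : ∃ g₀, (χ₁ g₀ : F) ≠ (χ₂ g₀ : F) := by
    by_contra hcon
    push_neg at hcon
    exact hne (MonoidHom.ext fun g => Units.ext (hcon g))
  set δ : G → F := fun g => (χ₁ g : F) - (χ₂ g : F) with hδdef
  have hδ : δ g₀ ≠ 0 := sub_ne_zero.mpr hg₀
  -- a vector not in span {v₀}
  have hspan : Submodule.span F {v₀} ≠ ⊤ := by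
    intro hcon
    have h1 : Module.finrank F (Submodule.span F {v₀}) = 1 := finrank_span_singleton hv₀
    rw [hcon, finrank_top] at h1
    rw [hdim] at h1
    omega
  obtain ⟨w, hw⟩ : ∃ w, w ∉ Submodule.span F {v₀} := by
    by_contra hcon
    push_neg at hcon
    exact hspan (Submodule.eq_top_iff'.mpr hcon)
  obtain ⟨K₀, K₁, hK₀v, hK₁v, hK₀w, hK₁w, hrecon⟩ := coordsAux hdim v₀ hv₀ w hw
  -- the cocycle
  have hcex : ∀ g : G, ∃ t : F, ρ g w = (χ₂ g : F) • w + t • v₀ := by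
    intro g
    obtain ⟨t, ht⟩ := Submodule.mem_span_singleton.mp (hquot g w)
    refine ⟨t, ?_⟩
    rw [ht]
    abel
  choose co hco using hcex
  -- nonsplitness in cocycle form
  have hns : ¬∃ t : F, ∀ g, co g = t * δ g := by
    rintro ⟨t, ht⟩
    apply hnonsplit
    refine ⟨w - t • v₀, fun hmem => hw ?_, fun g => ?_⟩
    · have h2 : w = (w - t • v₀) + t • v₀ := by abel
      rw [h2]
      exact Submodule.add_mem _ hmem
        (Submodule.smul_mem _ _ (Submodule.mem_span_singleton_self v₀))
    · rw [map_sub, hco g, map_smul, heig g, ht g, hδdef]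
      module
  -- coordinates of the action
  have hρ₀ : ∀ g : G, K₀ ∘ₗ ρ g = (χ₁ g : F) • K₀ + co g • K₁ := by
    intro g
    refine LinearMap.ext fun v => ?_
    conv_lhs => rw [LinearMap.comp_apply, ← hrecon v]
    rw [map_add, map_smul, map_smul, heig, hco g]
    simp only [map_add, map_smul, hK₀v, hK₀w, smul_eq_mul, LinearMap.add_apply,
      LinearMap.smul_apply]
    ring
  have hρ₁ : ∀ g : G, K₁ ∘ₗ ρ g = (χ₂ g : F) • K₁ := by
    intro g
    refine LinearMap.ext fun v => ?_
    conv_lhs => rw [LinearMap.comp_apply, ← hrecon v]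
    rw [map_add, map_smul, map_smul, heig, hco g]
    simp only [map_add, map_smul, hK₁v, hK₁w, smul_eq_mul, LinearMap.smul_apply]
    ring
  have hproj₀T : ∀ (g : G) (x : V ⊗[F] M₀),
      projAux K₀ (T g x) = (χ₁ g : F) • projAux K₀ x + co g • projAux K₁ x := by
    intro g x
    rw [hTmap, projAux_map, hρ₀ g, projAux_add_map]
  have hproj₁T : ∀ (g : G) (x : V ⊗[F] M₀),
      projAux K₁ (T g x) = (χ₂ g : F) • projAux K₁ x := by
    intro g x
    rw [hTmap, projAux_map, hρ₁ g, projAux_smul_map]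
  -- the submodule B
  set B : Submodule F M₀ := M'.comap (TensorProduct.mk F V M₀ v₀) with hBdef
  have hBmem : ∀ m : M₀, m ∈ B ↔ v₀ ⊗ₜ[F] m ∈ M' := fun m => Iff.rfl
  -- key structure lemma
  have lemma1 : ∀ x ∈ M', projAux K₀ x ∈ B ∧ projAux K₁ x ∈ B ∧
      w ⊗ₜ[F] (projAux K₁ x) ∈ M' := by
    intro x hx
    have hkey : ∀ g : G, δ g • projAux K₀ x + co g • projAux K₁ x ∈ B := by
      intro g
      have hy : T g x - (χ₂ g : F) • x ∈ M' :=
        Submodule.sub_mem _ (hM' g x hx) (Submodule.smul_mem _ _ hx)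
      have h1 : projAux K₁ (T g x - (χ₂ g : F) • x) = 0 := by
        rw [map_sub, map_smul, hproj₁T, sub_self]
      have h0 : projAux K₀ (T g x - (χ₂ g : F) • x)
          = δ g • projAux K₀ x + co g • projAux K₁ x := by
        rw [map_sub, map_smul, hproj₀T, hδdef]
        module
      have hre := reconAux v₀ w K₀ K₁ hrecon (T g x - (χ₂ g : F) • x)
      rw [h0, h1, tmul_zero, add_zero] at hre
      rw [hBmem, hre]
      exact hy
    have hq : ∀ g : G, δ g • B.mkQ (projAux K₀ x) = co g • (-(B.mkQ (projAux K₁ x))) := by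
      intro g
      have h3 : B.mkQ (δ g • projAux K₀ x + co g • projAux K₁ x) = 0 :=
        (Submodule.Quotient.mk_eq_zero B).mpr (hkey g)
      rw [map_add, map_smul, map_smul] at h3
      rw [smul_neg, eq_neg_iff_add_eq_zero]
      exact h3
    obtain ⟨hb0, ha0⟩ := starAux δ co g₀ hδ hns _ _ hq
    rw [neg_eq_zero] at ha0
    have hbB : projAux K₀ x ∈ B := by
      rw [← Submodule.Quotient.mk_eq_zero B]
      exact hb0
    have haB : projAux K₁ x ∈ B := by
      rw [← Submodule.Quotient.mk_eq_zero B]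
      exact ha0
    refine ⟨hbB, haB, ?_⟩
    have hre := reconAux v₀ w K₀ K₁ hrecon x
    have h5 : w ⊗ₜ[F] (projAux K₁ x) = x - v₀ ⊗ₜ[F] (projAux K₀ x) := by
      rw [eq_sub_iff_add_eq, add_comm]
      exact hre
    rw [h5]
    exact Submodule.sub_mem _ hx hbB
  -- eigenvector lemma
  have eig : ∀ x : V ⊗[F] M₀, (∀ g, T g x = (χ₁ g : F) • x) →
      projAux K₁ x = 0 ∧ x = v₀ ⊗ₜ[F] projAux K₀ x := by
    intro x hx
    have h1 : projAux K₁ x = 0 := by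
      have h2 := congrArg (projAux K₁) (hx g₀)
      rw [hproj₁T, map_smul] at h2
      have h3 : δ g₀ • projAux K₁ x = 0 := by
        rw [hδdef, sub_smul, h2, sub_self]
      exact (smul_eq_zero.mp h3).resolve_left hδ
    refine ⟨h1, ?_⟩
    have hre := reconAux v₀ w K₀ K₁ hrecon x
    rw [h1, tmul_zero, add_zero] at hre
    exact hre.symm
  -- facts about elements of the Hom-space
  have hchar : ∀ (g : G) (s : F), (charRep χ₁ (F := F)) g s = (χ₁ g : F) * s := by
    intro g s
    simp [charRep]
  have hφval : ∀ (φ : ↥(equivHom (charRep χ₁) τ)) (s : F),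
      ((φ : F →ₗ[F] ↥M') s : V ⊗[F] M₀) = s • ((φ : F →ₗ[F] ↥M') 1 : V ⊗[F] M₀) := by
    intro φ s
    have : (φ : F →ₗ[F] ↥M') s = s • (φ : F →ₗ[F] ↥M') 1 := by
      conv_lhs => rw [show s = s • (1 : F) by simp, map_smul]
    rw [this]
    rfl
  let E1 : ↥(equivHom (charRep χ₁) τ) → V ⊗[F] M₀ :=
    fun φ => ((φ : F →ₗ[F] ↥M') 1 : V ⊗[F] M₀)
  have hE1add : ∀ φ ψ : ↥(equivHom (charRep χ₁) τ), E1 (φ + ψ) = E1 φ + E1 ψ := fun _ _ => rfl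
  have hE1smul : ∀ (r : F) (φ : ↥(equivHom (charRep χ₁) τ)), E1 (r • φ) = r • E1 φ :=
    fun _ _ => rfl
  have hE1zero : E1 0 = 0 := rfl
  have hE1inj : Function.Injective E1 := by
    intro φ ψ h
    apply Subtype.ext
    apply LinearMap.ext
    intro s
    apply Subtype.ext
    calc ((φ : F →ₗ[F] ↥M') s : V ⊗[F] M₀) = s • E1 φ := hφval φ s
      _ = s • E1 ψ := by rw [h]
      _ = ((ψ : F →ₗ[F] ↥M') s : V ⊗[F] M₀) := (hφval ψ s).symm
  have hφeig : ∀ (φ : ↥(equivHom (charRep χ₁) τ)) (g : G),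
      T g ((φ : F →ₗ[F] ↥M') 1 : V ⊗[F] M₀)
        = (χ₁ g : F) • ((φ : F →ₗ[F] ↥M') 1 : V ⊗[F] M₀) := by
    intro φ g
    have h2 := φ.2 g 1
    calc T g ((φ : F →ₗ[F] ↥M') 1 : V ⊗[F] M₀)
        = ((τ g ((φ : F →ₗ[F] ↥M') 1) : ↥M') : V ⊗[F] M₀) := rfl
      _ = (((φ : F →ₗ[F] ↥M') ((charRep χ₁ (F := F)) g 1)) : V ⊗[F] M₀) := by rw [h2]
      _ = (((φ : F →ₗ[F] ↥M') ((χ₁ g : F))) : V ⊗[F] M₀) := by rw [hchar, mul_one]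
      _ = (χ₁ g : F) • ((φ : F →ₗ[F] ↥M') 1 : V ⊗[F] M₀) := hφval φ _
  -- the map β : B → Hom-space
  have hβaux : ∀ (b : ↥B) (s : F), v₀ ⊗ₜ[F] (s • (b : M₀)) ∈ M' := by
    intro b s
    exact (hBmem _).mp (Submodule.smul_mem B s b.2)
  let φfun : ↥B → (F →ₗ[F] ↥M') := fun b =>
    { toFun := fun s => ⟨v₀ ⊗ₜ[F] (s • (b : M₀)), hβaux b s⟩
      map_add' := fun s t => Subtype.ext (by simp [add_smul, tmul_add])
      map_smul' := fun r s => Subtype.ext (by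
        show v₀ ⊗ₜ[F] ((r * s) • (b : M₀)) = r • (v₀ ⊗ₜ[F] (s • (b : M₀)))
        rw [mul_smul, tmul_smul]) }
  have hφfunH : ∀ b : ↥B, φfun b ∈ equivHom (charRep χ₁) τ := by
    intro b g s
    apply Subtype.ext
    show v₀ ⊗ₜ[F] (((charRep χ₁ (F := F)) g s) • (b : M₀))
        = T g (v₀ ⊗ₜ[F] (s • (b : M₀)))
    rw [hchar, hTmap, TensorProduct.map_tmul, LinearMap.id_apply, heig, smul_tmul, smul_smul]
  let βL : ↥B →ₗ[F] ↥(equivHom (charRep χ₁) τ) :=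
    { toFun := fun b => ⟨φfun b, hφfunH b⟩
      map_add' := fun a b => Subtype.ext (LinearMap.ext fun s => Subtype.ext (by
        show v₀ ⊗ₜ[F] (s • ((a : M₀) + (b : M₀))) = v₀ ⊗ₜ[F] (s • (a : M₀)) + v₀ ⊗ₜ[F] (s • (b : M₀))
        rw [smul_add, tmul_add]))
      map_smul' := fun r a => Subtype.ext (LinearMap.ext fun s => Subtype.ext (by
        show v₀ ⊗ₜ[F] (s • (r • (a : M₀))) = r • (v₀ ⊗ₜ[F] (s • (a : M₀)))
        rw [smul_comm, tmul_smul])) }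
  have hβval : ∀ (b : ↥B) (s : F),
      (((βL b : F →ₗ[F] ↥M') s) : V ⊗[F] M₀) = v₀ ⊗ₜ[F] (s • (b : M₀)) := fun _ _ => rfl
  have hfe : ∀ φ : ↥(equivHom (charRep χ₁) τ),
      ((φ : F →ₗ[F] ↥M') 1 : V ⊗[F] M₀)
        = v₀ ⊗ₜ[F] projAux K₀ ((φ : F →ₗ[F] ↥M') 1 : V ⊗[F] M₀) :=
    fun φ => (eig _ (hφeig φ)).2
  have hfeB : ∀ φ : ↥(equivHom (charRep χ₁) τ),
      projAux K₀ ((φ : F →ₗ[F] ↥M') 1 : V ⊗[F] M₀) ∈ B := by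
    intro φ
    rw [hBmem, ← hfe φ]
    exact ((φ : F →ₗ[F] ↥M') 1).2
  have hβe : ∀ φ : ↥(equivHom (charRep χ₁) τ),
      βL ⟨projAux K₀ ((φ : F →ₗ[F] ↥M') 1 : V ⊗[F] M₀), hfeB φ⟩ = φ := by
    intro φ
    apply Subtype.ext
    apply LinearMap.ext
    intro s
    apply Subtype.ext
    rw [hβval]
    show v₀ ⊗ₜ[F] (s • projAux K₀ ((φ : F →ₗ[F] ↥M') 1 : V ⊗[F] M₀)) = _
    rw [tmul_smul, ← hfe φ, ← hφval]
  have heβ : ∀ b : ↥B, projAux K₀ (((βL b : F →ₗ[F] ↥M') 1) : V ⊗[F] M₀) = (b : M₀) := by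
    intro b
    rw [hβval]
    simp [hK₀v]
  have hβinj : Function.Injective βL := by
    intro a b h
    apply Subtype.ext
    rw [← heβ a, ← heβ b, h]
  -- evaluation map facts
  have hev : ∀ (s : F) (φ : ↥(equivHom (charRep χ₁) τ)),
      evalMap (charRep χ₁) τ (s ⊗ₜ[F] φ) = (φ : F →ₗ[F] ↥M') s := by
    intro s φ
    simp [evalMap]
  -- the maps L₀, L₁
  let L₀ : ↥M' →ₗ[F] ↥B :=
    LinearMap.codRestrict B ((projAux K₀) ∘ₗ M'.subtype) (fun x => (lemma1 x.1 x.2).1)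
  let L₁ : ↥M' →ₗ[F] ↥B :=
    LinearMap.codRestrict B ((projAux K₁) ∘ₗ M'.subtype) (fun x => (lemma1 x.1 x.2).2.1)
  have hL₀ : ∀ x : ↥M', (L₀ x : M₀) = projAux K₀ (x : V ⊗[F] M₀) := fun _ => rfl
  have hL₁ : ∀ x : ↥M', (L₁ x : M₀) = projAux K₁ (x : V ⊗[F] M₀) := fun _ => rfl
  -- the map ι
  let ι : ↥M' →ₗ[F] V ⊗[F] ↥(equivHom (charRep χ₁) τ) :=
    ((TensorProduct.mk F V ↥(equivHom (charRep χ₁) τ)) v₀) ∘ₗ (βL ∘ₗ L₀)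
      + ((TensorProduct.mk F V ↥(equivHom (charRep χ₁) τ)) w) ∘ₗ (βL ∘ₗ L₁)
  have hι : ∀ x : ↥M', ι x = v₀ ⊗ₜ[F] (βL (L₀ x)) + w ⊗ₜ[F] (βL (L₁ x)) := fun x => rfl
  -- component computations for ι
  have hL₀τ : ∀ (g : G) (x : ↥M'), L₀ (τ g x) = (χ₁ g : F) • L₀ x + co g • L₁ x := by
    intro g x
    apply Subtype.ext
    rw [hL₀, hτval, hproj₀T]
    rfl
  have hL₁τ : ∀ (g : G) (x : ↥M'), L₁ (τ g x) = (χ₂ g : F) • L₁ x := by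
    intro g x
    apply Subtype.ext
    rw [hL₁, hτval, hproj₁T]
    rfl
  -- equivariance of ι
  have hιequiv : ∀ (g : G) (x : ↥M'),
      ι (τ g x) = TensorProduct.map (ρ g) LinearMap.id (ι x) := by
    intro g x
    rw [hι, hι, map_add, TensorProduct.map_tmul, TensorProduct.map_tmul,
      LinearMap.id_apply, LinearMap.id_apply, heig, hco, hL₀τ, hL₁τ, map_add,
      map_smul, map_smul, map_smul]
    rw [tmul_add, add_tmul, tmul_smul, tmul_smul, tmul_smul, smul_tmul', smul_tmul',
      smul_tmul']
    abel
  -- ι ∘ ev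
  have hιev : ∀ (s : F) (φ : ↥(equivHom (charRep χ₁) τ)),
      ι (evalMap (charRep χ₁) τ (s ⊗ₜ[F] φ)) = (s • v₀) ⊗ₜ[F] φ := by
    intro s φ
    rw [hev, hι]
    have h0 : L₀ ((φ : F →ₗ[F] ↥M') s)
        = s • (⟨projAux K₀ ((φ : F →ₗ[F] ↥M') 1 : V ⊗[F] M₀), hfeB φ⟩ : ↥B) := by
      apply Subtype.ext
      rw [hL₀, hφval, map_smul]
      rfl
    have h1 : L₁ ((φ : F →ₗ[F] ↥M') s) = 0 := by
      apply Subtype.ext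
      rw [hL₁, hφval, map_smul, (eig _ (hφeig φ)).1, smul_zero]
      rfl
    rw [h0, h1, map_zero, tmul_zero, add_zero, map_smul, hβe]
    rw [tmul_smul]
    exact (smul_tmul' s v₀ φ).symm
  -- injectivity of ι
  have hιcomp₀ : ∀ x : ↥M', projAux K₀ (ι x) = βL (L₀ x) := by
    intro x
    rw [hι, map_add, projAux_tmul, projAux_tmul, hK₀v, hK₀w, one_smul, zero_smul, add_zero]
  have hιcomp₁ : ∀ x : ↥M', projAux K₁ (ι x) = βL (L₁ x) := by
    intro x
    rw [hι, map_add, projAux_tmul, projAux_tmul, hK₁v, hK₁w, one_smul, zero_smul, zero_add]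
  have hιinj : Function.Injective ι := by
    intro a b hab
    have h0 : βL (L₀ a) = βL (L₀ b) := by rw [← hιcomp₀, ← hιcomp₀, hab]
    have h1 : βL (L₁ a) = βL (L₁ b) := by rw [← hιcomp₁, ← hιcomp₁, hab]
    have hb := congrArg Subtype.val (hβinj h0)
    have ha := congrArg Subtype.val (hβinj h1)
    rw [hL₀, hL₀] at hb
    rw [hL₁, hL₁] at ha
    apply Subtype.ext
    rw [← reconAux v₀ w K₀ K₁ hrecon (a : V ⊗[F] M₀), hb, ha,
      reconAux v₀ w K₀ K₁ hrecon (b : V ⊗[F] M₀)]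
  -- injectivity of the evaluation map
  have hevinj : Function.Injective (evalMap (charRep χ₁) τ) := by
    have hform : ∀ z : F ⊗[F] ↥(equivHom (charRep χ₁) τ),
        evalMap (charRep χ₁) τ z
          = ((TensorProduct.lid F ↥(equivHom (charRep χ₁) τ)) z : F →ₗ[F] ↥M') 1 := by
      intro z
      conv_lhs => rw [← (TensorProduct.lid F ↥(equivHom (charRep χ₁) τ)).symm_apply_apply z]
      rw [TensorProduct.lid_symm_apply, hev]
    intro x y hxy
    rw [hform, hform] at hxy
    apply (TensorProduct.lid F ↥(equivHom (charRep χ₁) τ)).injective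
    apply Subtype.ext
    apply LinearMap.ext
    intro s
    apply Subtype.ext
    calc (((TensorProduct.lid F ↥(equivHom (charRep χ₁) τ)) x : F →ₗ[F] ↥M') s : V ⊗[F] M₀)
        = s • (((TensorProduct.lid F ↥(equivHom (charRep χ₁) τ)) x : F →ₗ[F] ↥M') 1 : V ⊗[F] M₀) :=
          hφval _ s
      _ = s • (((TensorProduct.lid F ↥(equivHom (charRep χ₁) τ)) y : F →ₗ[F] ↥M') 1 : V ⊗[F] M₀) := by
          rw [hxy]
      _ = (((TensorProduct.lid F ↥(equivHom (charRep χ₁) τ)) y : F →ₗ[F] ↥M') s : V ⊗[F] M₀) :=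
          (hφval _ s).symm
  refine ⟨hevinj, ι, ⟨hιinj, hιequiv, hιev⟩, ?_⟩
  -- uniqueness
  rintro ι' ⟨hinj', hequiv', hev'⟩
  have hι'B : ∀ (m : M₀) (hmB : m ∈ B) (hmem : v₀ ⊗ₜ[F] m ∈ M'),
      ι' ⟨v₀ ⊗ₜ[F] m, hmem⟩ = v₀ ⊗ₜ[F] (βL ⟨m, hmB⟩) := by
    intro m hmB hmem
    have h1 : evalMap (charRep χ₁) τ ((1 : F) ⊗ₜ[F] (βL ⟨m, hmB⟩))
        = ⟨v₀ ⊗ₜ[F] m, hmem⟩ := by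
      rw [hev]
      apply Subtype.ext
      rw [hβval, one_smul]
    have h2 := hev' 1 (βL ⟨m, hmB⟩)
    rw [h1, one_smul] at h2
    exact h2
  have hwpart : ∀ (a : M₀) (ha : w ⊗ₜ[F] a ∈ M') (haB : a ∈ B),
      ι' ⟨w ⊗ₜ[F] a, ha⟩ = w ⊗ₜ[F] (βL ⟨a, haB⟩) := by
    intro a ha haB
    set y := ι' ⟨w ⊗ₜ[F] a, ha⟩ with hy
    have hstep : ∀ g : G, δ g • E1 (projAux K₀ y)
        = co g • (E1 (βL ⟨a, haB⟩) - E1 (projAux K₁ y)) := by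
      intro g
      have e1 : τ g ⟨w ⊗ₜ[F] a, ha⟩
          = (χ₂ g : F) • (⟨w ⊗ₜ[F] a, ha⟩ : ↥M')
            + co g • (⟨v₀ ⊗ₜ[F] a, (hBmem a).mp haB⟩ : ↥M') := by
        apply Subtype.ext
        show T g (w ⊗ₜ[F] a) = _
        rw [hTmap, TensorProduct.map_tmul, LinearMap.id_apply, hco g]
        show ((χ₂ g : F) • w + co g • v₀) ⊗ₜ[F] a
          = (χ₂ g : F) • (w ⊗ₜ[F] a) + co g • (v₀ ⊗ₜ[F] a)
        rw [add_tmul, smul_tmul', smul_tmul']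
      have e2 := hequiv' g ⟨w ⊗ₜ[F] a, ha⟩
      rw [e1, map_add, map_smul, map_smul, hι'B a haB, ← hy] at e2
      have e3 := congrArg (fun z => E1 (projAux K₀ z)) e2
      simp only [map_add, map_smul, projAux_tmul, hK₀v, one_smul] at e3
      rw [projAux_map, hρ₀ g, projAux_add_map] at e3
      simp only [hE1add, hE1smul] at e3
      calc δ g • E1 (projAux K₀ y)
          = ((χ₁ g : F) • E1 (projAux K₀ y) + co g • E1 (projAux K₁ y))
            - ((χ₂ g : F) • E1 (projAux K₀ y) + co g • E1 (projAux K₁ y)) := by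
            rw [hδdef]; module
        _ = ((χ₂ g : F) • E1 (projAux K₀ y) + co g • E1 (βL ⟨a, haB⟩))
            - ((χ₂ g : F) • E1 (projAux K₀ y) + co g • E1 (projAux K₁ y)) := by
            rw [← e3]
        _ = co g • (E1 (βL ⟨a, haB⟩) - E1 (projAux K₁ y)) := by module
    obtain ⟨hs, hu⟩ := starAux δ co g₀ hδ hns _ _ hstep
    rw [sub_eq_zero] at hu
    have hs' : projAux K₀ y = 0 := hE1inj (by rw [hs, hE1zero])
    have hu' : βL ⟨a, haB⟩ = projAux K₁ y := hE1inj hu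
    have hre := reconAux v₀ w K₀ K₁ hrecon y
    rw [hs', tmul_zero, zero_add, ← hu'] at hre
    exact hre.symm
  -- conclude uniqueness
  apply LinearMap.ext
  intro x
  have hmem0 : v₀ ⊗ₜ[F] (projAux K₀ (x : V ⊗[F] M₀)) ∈ M' := (hBmem _).mp (lemma1 x.1 x.2).1
  have hmemw : w ⊗ₜ[F] (projAux K₁ (x : V ⊗[F] M₀)) ∈ M' := (lemma1 x.1 x.2).2.2
  have hxdec : x = (⟨v₀ ⊗ₜ[F] (projAux K₀ (x : V ⊗[F] M₀)), hmem0⟩ : ↥M')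
      + ⟨w ⊗ₜ[F] (projAux K₁ (x : V ⊗[F] M₀)), hmemw⟩ := by
    apply Subtype.ext
    exact (reconAux v₀ w K₀ K₁ hrecon (x : V ⊗[F] M₀)).symm
  calc ι' x = ι' ⟨v₀ ⊗ₜ[F] (projAux K₀ (x : V ⊗[F] M₀)), hmem0⟩
        + ι' ⟨w ⊗ₜ[F] (projAux K₁ (x : V ⊗[F] M₀)), hmemw⟩ := by
        rw [← map_add, ← hxdec]
    _ = v₀ ⊗ₜ[F] (βL ⟨projAux K₀ (x : V ⊗[F] M₀), (lemma1 x.1 x.2).1⟩)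
        + w ⊗ₜ[F] (βL ⟨projAux K₁ (x : V ⊗[F] M₀), (lemma1 x.1 x.2).2.1⟩) := by
        rw [hι'B _ (lemma1 x.1 x.2).1, hwpart _ _ (lemma1 x.1 x.2).2.1]
    _ = ι x := by rw [hι]; rfl
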